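/- Let δ, β > 0, let m, n, k be positive integers with m ≤ min{βn/(8k), βn/(2k²)}, and let A ⊆ [k]^n have equal-slices density δ. Choose uniformly at random a subset J ⊆ [n] of size m, then independently choose x uniformly from [k]^J and choose y ∈ [k]^{[n]∖J} according to the equal-slices measure on [k]^{[n]∖J}. Then the probability that the combined string (x, y) lies in A is between δ − β and δ + β. -/

import Mathlib

open Finset

/-- The equal-slices probability of a single string `x ∈ [k]^n`. -/
noncomputable def slicePr (k n : ℕ) (x : Fin n → Fin k) : ℝ :=
  (((n + k - 1).choose (k - 1) : ℝ))⁻¹ *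
    ((Nat.multinomial Finset.univ
      (fun j : Fin k => (Finset.univ.filter fun i => x i = j).card) : ℝ))⁻¹

/-- The equal-slices measure of a set `A ⊆ [k]^n`. -/
noncomputable def esDensity {k n : ℕ} (A : Finset (Fin n → Fin k)) : ℝ :=
  ∑ x ∈ A, slicePr k n x


/-- count of color `j` in string `f` -/
def cnt {k : ℕ} {W : Type} [Fintype W] (f : W → Fin k) (j : Fin k) : ℕ :=
  (Finset.univ.filter fun i => f i = j).card

/-- product of factorials of counts -/
def Pfac {k : ℕ} {W : Type} [Fintype W] (f : W → Fin k) : ℕ :=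
  ∏ j : Fin k, (cnt f j).factorial

lemma cnt_sum {k : ℕ} {W : Type} [Fintype W] (f : W → Fin k) :
    ∑ j : Fin k, cnt f j = Fintype.card W := by
  simp only [cnt, Finset.card_filter]
  rw [Finset.sum_comm]
  simp

lemma cnt_comp_equiv {k : ℕ} {V W : Type} [Fintype V] [Fintype W] (g : V ≃ W)
    (f : W → Fin k) (j : Fin k) : cnt (fun v => f (g v)) j = cnt f j := by
  rw [cnt, cnt, ← Fintype.card_subtype, ← Fintype.card_subtype]
  exact Fintype.card_congr (g.subtypeEquiv fun v => Iff.rfl)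

lemma Pfac_comp_equiv {k : ℕ} {V W : Type} [Fintype V] [Fintype W] (g : V ≃ W)
    (f : W → Fin k) : Pfac (fun v => f (g v)) = Pfac f := by
  unfold Pfac
  exact Finset.prod_congr rfl fun j _ => by rw [cnt_comp_equiv]

lemma prod_fact_add_ite {k : ℕ} (c : Fin k → ℕ) (x : Fin k) :
    (∏ j : Fin k, (c j + if x = j then 1 else 0).factorial)
      = (c x + 1) * ∏ j : Fin k, (c j).factorial := by
  rw [← Finset.mul_prod_erase Finset.univ (fun j => (c j + if x = j then 1 else 0).factorial)
      (Finset.mem_univ x),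
      ← Finset.mul_prod_erase Finset.univ (fun j => (c j).factorial) (Finset.mem_univ x)]
  have h1 : ∀ j ∈ Finset.univ.erase x,
      (c j + if x = j then 1 else 0).factorial = (c j).factorial := by
    intro j hj
    rw [if_neg (fun h => (Finset.mem_erase.mp hj).1 h.symm), Nat.add_zero]
  rw [Finset.prod_congr rfl h1, if_pos rfl, Nat.factorial_succ, Nat.mul_assoc]

lemma cnt_cons {k N : ℕ} (x : Fin k) (y : Fin N → Fin k) (j : Fin k) :
    cnt (Fin.cons x y) j = cnt y j + if x = j then 1 else 0 := by
  simp only [cnt, Finset.card_filter, Fin.sum_univ_succ, Fin.cons_zero, Fin.cons_succ]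
  omega

lemma Pfac_cons {k N : ℕ} (x : Fin k) (y : Fin N → Fin k) :
    Pfac (Fin.cons x y) = (cnt y x + 1) * Pfac y := by
  unfold Pfac
  rw [Finset.prod_congr rfl (fun j _ => by rw [cnt_cons]), prod_fact_add_ite]

lemma Hsum {k : ℕ} (hk : 0 < k) :
    ∀ N : ℕ, (∑ y : Fin N → Fin k, Pfac y) * (k - 1).factorial = (N + k - 1).factorial := by
  intro N
  induction N with
  | zero =>
    have h1 : ∀ y : Fin 0 → Fin k, Pfac y = 1 := by
      intro y
      unfold Pfac cnt
      simp
    simp [h1]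
  | succ N ih =>
    have h2 : (∑ y : Fin (N + 1) → Fin k, Pfac y) = (N + k) * ∑ y : Fin N → Fin k, Pfac y := by
      have h3 : (∑ p : Fin k × (Fin N → Fin k), Pfac (Fin.cons p.1 p.2))
          = ∑ y : Fin (N + 1) → Fin k, Pfac y := by
        apply Fintype.sum_equiv (Fin.consEquiv fun _ => Fin k)
        intro p
        rfl
      rw [← h3, Fintype.sum_prod_type]
      simp only [Pfac_cons]
      rw [Finset.sum_comm]
      have h4 : ∀ y : Fin N → Fin k, (∑ x : Fin k, (cnt y x + 1) * Pfac y)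
          = (N + k) * Pfac y := by
        intro y
        rw [← Finset.sum_mul]
        congr 1
        rw [Finset.sum_add_distrib, cnt_sum]
        simp
      rw [Finset.sum_congr rfl fun y _ => h4 y, ← Finset.mul_sum]
    rw [h2, Nat.mul_assoc, ih]
    have h5 : N + 1 + k - 1 = (N + k - 1) + 1 := by omega
    rw [h5, Nat.factorial_succ]
    congr 1
    omega

lemma Pfac_pos {k : ℕ} {W : Type} [Fintype W] (f : W → Fin k) : 0 < Pfac f :=
  Finset.prod_pos fun j _ => Nat.factorial_pos _

lemma slicePr_eq (k n : ℕ) (x : Fin n → Fin k) :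
    slicePr k n x = (((n + k - 1).choose (k - 1) : ℝ))⁻¹ * ((Pfac x : ℝ) / (n.factorial : ℝ)) := by
  rw [slicePr]
  congr 1
  have hspec := Nat.multinomial_spec Finset.univ (fun j : Fin k => cnt x j)
  have hsum : ∑ j : Fin k, cnt x j = n := by rw [cnt_sum]; simp
  rw [hsum] at hspec
  have hPf : (∏ j : Fin k, (cnt x j).factorial) = Pfac x := rfl
  rw [hPf] at hspec
  have hM : Nat.multinomial Finset.univ (fun j : Fin k => (Finset.univ.filter fun i => x i = j).card)
      = Nat.multinomial Finset.univ (fun j : Fin k => cnt x j) := rfl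
  rw [hM]
  have hMpos : (0:ℝ) < (Nat.multinomial Finset.univ (fun j : Fin k => cnt x j) : ℝ) := by
    exact_mod_cast Nat.multinomial_pos _ _
  have hfac : (0:ℝ) < (n.factorial : ℝ) := by exact_mod_cast Nat.factorial_pos n
  have hcast : (Pfac x : ℝ) * (Nat.multinomial Finset.univ (fun j : Fin k => cnt x j) : ℝ)
      = (n.factorial : ℝ) := by exact_mod_cast hspec
  field_simp
  linarith [hcast]

lemma sum_slicePr {k : ℕ} (hk : 0 < k) (N : ℕ) :
    ∑ y : Fin N → Fin k, slicePr k N y = 1 := by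
  have hC : ((N + k - 1).choose (k - 1)) * ((k-1).factorial * N.factorial)
      = (N + k - 1).factorial := by
    have h1 : k - 1 ≤ N + k - 1 := by omega
    have := Nat.choose_mul_factorial_mul_factorial h1
    rw [show N + k - 1 - (k - 1) = N by omega] at this
    rw [← this]; ring
  have hH := Hsum hk N
  -- ∑ Pfac = choose * N!
  have hHP : (∑ y : Fin N → Fin k, Pfac y) = ((N + k - 1).choose (k - 1)) * N.factorial := by
    have hpos : 0 < (k-1).factorial := Nat.factorial_pos _
    apply Nat.eq_of_mul_eq_mul_right hpos
    rw [hH, ← hC]; ring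
  simp only [slicePr_eq]
  rw [← Finset.mul_sum, ← Finset.sum_div]
  have hcast : (∑ y : Fin N → Fin k, (Pfac y : ℝ)) = (((N + k - 1).choose (k - 1)) : ℝ) * N.factorial := by
    rw [← Nat.cast_sum, hHP]; push_cast; ring
  rw [hcast]
  have hch : (0:ℝ) < (((N + k - 1).choose (k - 1)) : ℝ) := by
    exact_mod_cast Nat.choose_pos (show k - 1 ≤ N + k - 1 by omega)
  have hfac : (0:ℝ) < (N.factorial : ℝ) := by exact_mod_cast Nat.factorial_pos N
  field_simp

lemma slicePr_nonneg (k n : ℕ) (x : Fin n → Fin k) : 0 ≤ slicePr k n x := by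
  rw [slicePr]
  positivity

/-- restriction count -/
lemma cnt_restrict {k : ℕ} {S : Type} [Fintype S] [DecidableEq S] (z : S → Fin k)
    (s : S) (j : Fin k) :
    cnt (fun y : {y : S // y ≠ s} => z y.val) j + (if z s = j then 1 else 0) = cnt z j := by
  classical
  simp only [cnt, Finset.card_filter]
  have hsub : (∑ y : {y : S // y ≠ s}, if z y.val = j then 1 else 0)
      = ∑ x ∈ Finset.univ.erase s, (if z x = j then 1 else 0) := by
    rw [Finset.sum_subtype (p := fun y => y ≠ s) (Finset.univ.erase s)
      (fun x => by simp [Finset.mem_erase]) (fun x => if z x = j then 1 else 0)]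
  rw [hsub, Finset.sum_erase_add Finset.univ _ (Finset.mem_univ s)]

lemma Pfac_restrict {k : ℕ} {S : Type} [Fintype S] [DecidableEq S] (z : S → Fin k) (s : S) :
    cnt z (z s) * Pfac (fun y : {y : S // y ≠ s} => z y.val) = Pfac z := by
  classical
  set z' : {y : S // y ≠ s} → Fin k := fun y => z y.val with hz'
  have h1 : Pfac z = (cnt z' (z s) + 1) * Pfac z' := by
    unfold Pfac
    rw [Finset.prod_congr rfl (fun j _ => by rw [← cnt_restrict z s j]), prod_fact_add_ite]
  have h2 : cnt z (z s) = cnt z' (z s) + 1 := by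
    rw [← cnt_restrict z s (z s), if_pos rfl]
  rw [h2, h1]

/-- `Option (A ⊕ T) ≃ Option A ⊕ T` -/
def optSum (A T : Type) : Option (A ⊕ T) ≃ (Option A ⊕ T) where
  toFun o := o.elim (Sum.inl none) (Sum.map some id)
  invFun w := Sum.elim (fun oa => oa.elim none (fun a => some (Sum.inl a))) (fun t => some (Sum.inr t)) w
  left_inv := by rintro (_ | a | t) <;> rfl
  right_inv := by rintro ((_ | a) | t) <;> rfl

def qEquiv (m : ℕ) (T : Type) : Option (Fin m ⊕ T) ≃ (Fin (m + 1) ⊕ T) :=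
  (optSum (Fin m) T).trans (Equiv.sumCongr (finSuccEquiv m).symm (Equiv.refl T))

lemma qEquiv_symm_inr {m : ℕ} {T : Type} (t : T) :
    (qEquiv m T).symm (Sum.inr t) = some (Sum.inr t) := by
  rw [Equiv.symm_apply_eq]
  rfl

lemma key (k : ℕ) (T : Type) [Fintype T] [DecidableEq T] :
    ∀ (m : ℕ) (S : Type) [Fintype S] [DecidableEq S] (z : S → Fin k),
    (∑ e : (Fin m ⊕ T) ≃ S, Pfac (fun t => z (e (Sum.inr t)))) ≤
      k ^ m * (Fintype.card T).factorial * Pfac z := by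
  intro m
  induction m with
  | zero =>
    intro S _ _ z
    by_cases hne : Nonempty ((Fin 0 ⊕ T) ≃ S)
    · obtain ⟨e0⟩ := hne
      have hcard : Fintype.card ((Fin 0 ⊕ T) ≃ S) = (Fintype.card T).factorial := by
        rw [Fintype.card_equiv e0]
        simp
      have hterm : ∀ e : (Fin 0 ⊕ T) ≃ S, Pfac (fun t => z (e (Sum.inr t))) = Pfac z := by
        intro e
        have h := Pfac_comp_equiv ((Equiv.emptySum (Fin 0) T).symm.trans e) z
        rw [← h]
        congr 1
      rw [Finset.sum_congr rfl (fun e _ => hterm e), Finset.sum_const, smul_eq_mul]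
      simp only [Finset.card_univ, hcard, pow_zero, one_mul]
      exact le_refl _
    · have : IsEmpty ((Fin 0 ⊕ T) ≃ S) := not_nonempty_iff.mp hne
      rw [Finset.univ_eq_empty, Finset.sum_empty]
      exact Nat.zero_le _
  | succ m ih =>
    intro S _ _ z
    classical
    -- step 1 : reindex over Option (Fin m ⊕ T) ≃ S
    have step1 : (∑ e : (Fin (m+1) ⊕ T) ≃ S, Pfac (fun t => z (e (Sum.inr t))))
        = ∑ f0 : Option (Fin m ⊕ T) ≃ S, Pfac (fun t => z (f0 (some (Sum.inr t)))) := by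
      refine (Fintype.sum_equiv (Equiv.equivCongr (qEquiv m T) (Equiv.refl S))
        (fun f0 => Pfac (fun t => z (f0 (some (Sum.inr t)))))
        (fun e => Pfac (fun t => z (e (Sum.inr t)))) ?_).symm
      intro f0
      congr 1
    have step2 : (∑ f0 : Option (Fin m ⊕ T) ≃ S, Pfac (fun t => z (f0 (some (Sum.inr t)))))
        = ∑ s : S, ∑ p : {f0 : Option (Fin m ⊕ T) ≃ S // f0 none = s},
            Pfac (fun t => z (p.val (some (Sum.inr t)))) :=
      (Fintype.sum_fiberwise (fun f0 : Option (Fin m ⊕ T) ≃ S => f0 none) _).symm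
    have step3 : ∀ s : S, (∑ p : {f0 : Option (Fin m ⊕ T) ≃ S // f0 none = s},
          Pfac (fun t => z (p.val (some (Sum.inr t)))))
        = ∑ e' : (Fin m ⊕ T) ≃ {y : S // y ≠ s},
            Pfac (fun t => (fun y : {y : S // y ≠ s} => z y.val) (e' (Sum.inr t))) := by
      intro s
      apply Fintype.sum_equiv (Equiv.optionSubtype s)
      intro p
      congr 1
    have step4 : (∑ s : S, Pfac (fun y : {y : S // y ≠ s} => z y.val)) ≤ k * Pfac z := by
      have grp : (∑ s : S, Pfac (fun y : {y : S // y ≠ s} => z y.val))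
          = ∑ j : Fin k, ∑ s ∈ Finset.univ.filter (fun s => z s = j),
              Pfac (fun y : {y : S // y ≠ s} => z y.val) :=
        (Finset.sum_fiberwise Finset.univ z _).symm
      rw [grp]
      have hfib : ∀ j : Fin k, (∑ s ∈ Finset.univ.filter (fun s => z s = j),
          Pfac (fun y : {y : S // y ≠ s} => z y.val)) ≤ Pfac z := by
        intro j
        rcases Nat.eq_zero_or_pos (cnt z j) with h0 | hpos
        · have : Finset.univ.filter (fun s => z s = j) = ∅ := by
            rwa [← Finset.card_eq_zero]
          rw [this, Finset.sum_empty]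
          exact Nat.zero_le _
        · have hsum : (∑ s ∈ Finset.univ.filter (fun s => z s = j),
              Pfac (fun y : {y : S // y ≠ s} => z y.val)) * cnt z j = Pfac z * cnt z j := by
            rw [Finset.sum_mul]
            have : ∀ s ∈ Finset.univ.filter (fun s => z s = j),
                Pfac (fun y : {y : S // y ≠ s} => z y.val) * cnt z j = Pfac z := by
              intro s hs
              have hzs : z s = j := (Finset.mem_filter.mp hs).2
              rw [← hzs, mul_comm]
              exact Pfac_restrict z s
            rw [Finset.sum_congr rfl this, Finset.sum_const, smul_eq_mul]
            have hcard : (Finset.univ.filter (fun s => z s = j)).card = cnt z j := rfl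
            rw [hcard, mul_comm]
          exact le_of_eq (Nat.eq_of_mul_eq_mul_right hpos hsum)
      calc (∑ j : Fin k, ∑ s ∈ Finset.univ.filter (fun s => z s = j),
              Pfac (fun y : {y : S // y ≠ s} => z y.val))
          ≤ ∑ _j : Fin k, Pfac z := Finset.sum_le_sum fun j _ => hfib j
        _ = k * Pfac z := by rw [Finset.sum_const, smul_eq_mul, Finset.card_univ, Fintype.card_fin]
    calc (∑ e : (Fin (m+1) ⊕ T) ≃ S, Pfac (fun t => z (e (Sum.inr t))))
        = ∑ s : S, ∑ e' : (Fin m ⊕ T) ≃ {y : S // y ≠ s},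
            Pfac (fun t => (fun y : {y : S // y ≠ s} => z y.val) (e' (Sum.inr t))) := by
          rw [step1, step2]
          exact Finset.sum_congr rfl fun s _ => step3 s
      _ ≤ ∑ s : S, k ^ m * (Fintype.card T).factorial * Pfac (fun y : {y : S // y ≠ s} => z y.val) :=
          Finset.sum_le_sum fun s _ => ih {y : S // y ≠ s} (fun y => z y.val)
      _ = k ^ m * (Fintype.card T).factorial * ∑ s : S, Pfac (fun y : {y : S // y ≠ s} => z y.val) := by
          rw [Finset.mul_sum]
      _ ≤ k ^ m * (Fintype.card T).factorial * (k * Pfac z) :=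
          Nat.mul_le_mul_left _ step4
      _ = k ^ (m+1) * (Fintype.card T).factorial * Pfac z := by ring

lemma choose_ratio {k : ℕ} (hk : 0 < k) (t : ℕ) :
    (t + 1 + k - 1).choose (k-1) * (t+1) = (t + k - 1).choose (k-1) * (t + k) := by
  have h1 : k - 1 ≤ t + k := by omega
  have e1 := Nat.choose_mul_factorial_mul_factorial h1
  have h2 : k - 1 ≤ t + k - 1 := by omega
  have e2 := Nat.choose_mul_factorial_mul_factorial h2
  rw [show t + k - (k-1) = t + 1 by omega] at e1
  rw [show t + k - 1 - (k-1) = t by omega] at e2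
  rw [show t + 1 + k - 1 = t + k by omega]
  apply Nat.eq_of_mul_eq_mul_right (Nat.mul_pos (Nat.factorial_pos (k-1)) (Nat.factorial_pos t))
  calc (t+k).choose (k-1) * (t+1) * ((k-1).factorial * t.factorial)
      = (t+k).choose (k-1) * (k-1).factorial * ((t+1) * t.factorial) := by ring
    _ = (t+k).choose (k-1) * (k-1).factorial * (t+1).factorial := by rw [Nat.factorial_succ]
    _ = (t+k).factorial := e1
    _ = (t + k - 1 + 1).factorial := by congr 1; omega
    _ = (t + k) * (t+k-1).factorial := by rw [Nat.factorial_succ]; congr 1; omega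
    _ = (t+k) * ((t+k-1).choose (k-1) * (k-1).factorial * t.factorial) := by rw [e2]
    _ = (t+k-1).choose (k-1) * (t+k) * ((k-1).factorial * t.factorial) := by ring

lemma choose_chain {k : ℕ} (hk : 0 < k) (a : ℝ) (ha : 0 ≤ a) (b : ℕ) :
    ∀ j : ℕ, (∀ t : ℕ, b ≤ t → t < b + j → ((k:ℝ) - 1) ≤ a * ((t:ℝ) + 1)) →
      (((b + j + k - 1).choose (k-1) : ℝ)) ≤ (1+a)^j * ((b + k - 1).choose (k-1) : ℝ) := by
  intro j
  induction j with
  | zero => intro _; simp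
  | succ j ih =>
    intro hyp
    have ihj := ih (fun t htb htj => hyp t htb (by omega))
    have hr := choose_ratio hk (b + j)
    have hrR : ((b + (j+1) + k - 1).choose (k-1) : ℝ) * ((b:ℝ) + (j:ℝ) + 1)
        = ((b + j + k - 1).choose (k-1) : ℝ) * ((b:ℝ) + (j:ℝ) + (k:ℝ)) := by
      rw [show b + (j+1) = b + j + 1 by omega]
      exact_mod_cast hr
    have hb : ((k:ℝ) - 1) ≤ a * ((b:ℝ) + (j:ℝ) + 1) := by
      have := hyp (b + j) (by omega) (by omega)
      push_cast at this
      linarith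
    have hpos : (0:ℝ) < (b:ℝ) + (j:ℝ) + 1 := by positivity
    have hCpos : (0:ℝ) ≤ ((b + j + k - 1).choose (k-1) : ℝ) := Nat.cast_nonneg _
    have hnew : ((b + (j+1) + k - 1).choose (k-1) : ℝ)
        ≤ (1 + a) * ((b + j + k - 1).choose (k-1) : ℝ) := by
      rw [← mul_le_mul_iff_left₀ hpos, hrR]
      nlinarith [hCpos, hb, hpos]
    calc ((b + (j+1) + k - 1).choose (k-1) : ℝ)
        ≤ (1+a) * ((b + j + k - 1).choose (k-1) : ℝ) := hnew
      _ ≤ (1+a) * ((1+a)^j * ((b + k - 1).choose (k-1) : ℝ)) :=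
          mul_le_mul_of_nonneg_left ihj (by linarith)
      _ = (1+a)^(j+1) * ((b + k - 1).choose (k-1) : ℝ) := by ring

lemma pow_one_add_le (a : ℝ) (ha : 0 ≤ a) :
    ∀ m : ℕ, (m:ℝ) * a ≤ 1/2 → (1+a)^m ≤ 1 + 2*(m:ℝ)*a := by
  intro m
  induction m with
  | zero => intro _; simp
  | succ m ih =>
    intro h
    have hm : (m:ℝ) * a ≤ 1/2 := by
      have : (m:ℝ) * a ≤ ((m:ℝ)+1) * a := by nlinarith
      push_cast at h
      linarith
    have ihm := ih hm
    have h1a : (0:ℝ) ≤ 1 + a := by linarith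
    have hp : (0:ℝ) ≤ (1+a)^m := pow_nonneg h1a m
    calc (1+a)^(m+1) = (1+a)^m * (1+a) := by ring
      _ ≤ (1 + 2*(m:ℝ)*a) * (1+a) := by nlinarith
      _ ≤ 1 + 2*(((m:ℕ):ℝ)+1)*a := by push_cast at h ⊢; nlinarith
      _ = 1 + 2*(((m+1:ℕ)):ℝ)*a := by push_cast; ring

set_option maxHeartbeats 2000000 in
/-- Let `A ⊆ [k]^n` have equal-slices density `δ`, and let
`m ≤ min {βn/(8k), βn/(2k²)}`.  Choose a uniformly random partition of the
coordinates into an `m`-set `J` and its complement (encoded by a uniformly random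
bijection `e : Fin m ⊕ Fin (n−m) ≃ Fin n`), then independently choose `x` uniform
on `[k]^J` and `y` equal-slices on `[k]^{[n]∖J}`.  Then the probability that the
combined string `(x, y)` lies in `A` is between `δ − β` and `δ + β`.
(Both the uniform and the equal-slices measures are invariant under coordinate
permutations, so this encoding agrees with choosing a uniformly random subset `J`
of size `m`.) -/
theorem equal_slices_to_uniform_restriction (k m n : ℕ) (hk : 0 < k) (hm : 0 < m)
    (hmn : m ≤ n) (δ β : ℝ) (hβ : 0 < β)
    (h1 : (m : ℝ) ≤ β * n / (8 * k)) (h2 : (m : ℝ) ≤ β * n / (2 * (k : ℝ) ^ 2))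
    (A : Finset (Fin n → Fin k)) (hA : esDensity A = δ) :
    δ - β ≤ ((Fintype.card ((Fin m ⊕ Fin (n - m)) ≃ Fin n) : ℝ))⁻¹ *
        ∑ e : (Fin m ⊕ Fin (n - m)) ≃ Fin n,
          ((k : ℝ) ^ m)⁻¹ *
            ∑ x : Fin m → Fin k, ∑ y : Fin (n - m) → Fin k,
              slicePr k (n - m) y *
                (if (fun i => Sum.elim x y (e.symm i)) ∈ A then (1 : ℝ) else 0) ∧
    ((Fintype.card ((Fin m ⊕ Fin (n - m)) ≃ Fin n) : ℝ))⁻¹ *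
        ∑ e : (Fin m ⊕ Fin (n - m)) ≃ Fin n,
          ((k : ℝ) ^ m)⁻¹ *
            ∑ x : Fin m → Fin k, ∑ y : Fin (n - m) → Fin k,
              slicePr k (n - m) y *
                (if (fun i => Sum.elim x y (e.symm i)) ∈ A then (1 : ℝ) else 0) ≤
      δ + β := by
  classical
  -- basic positivity
  have hnpos : 0 < n := lt_of_lt_of_le hm hmn
  have hnR : (0:ℝ) < (n:ℝ) := by exact_mod_cast hnpos
  have hkR : (1:ℝ) ≤ (k:ℝ) := by exact_mod_cast hk
  have hfacpos : (0:ℝ) < (n.factorial : ℝ) := by exact_mod_cast n.factorial_pos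
  have hkmpos : (0:ℝ) < (k:ℝ)^m := by positivity
  -- the equivalence witness and cardinality
  have e0 : (Fin m ⊕ Fin (n - m)) ≃ Fin n :=
    finSumFinEquiv.trans (finCongr (by omega))
  have hcardE : (Fintype.card ((Fin m ⊕ Fin (n - m)) ≃ Fin n)) = n.factorial := by
    rw [Fintype.card_equiv e0]
    simp only [Fintype.card_sum, Fintype.card_fin]
    congr 1
    omega
  -- weight function
  set w : (Fin n → Fin k) → ℝ := fun z =>
    ((n.factorial : ℝ))⁻¹ * (((k:ℝ)^m)⁻¹ *
      ∑ e : (Fin m ⊕ Fin (n - m)) ≃ Fin n, slicePr k (n - m) (fun t => z (e (Sum.inr t)))) with hw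
  -- reindexing per e
  have hinner : ∀ e : (Fin m ⊕ Fin (n - m)) ≃ Fin n,
      (∑ x : Fin m → Fin k, ∑ y : Fin (n - m) → Fin k,
        slicePr k (n - m) y * (if (fun i => Sum.elim x y (e.symm i)) ∈ A then (1:ℝ) else 0))
      = ∑ z : Fin n → Fin k,
          slicePr k (n - m) (fun t => z (e (Sum.inr t))) * (if z ∈ A then (1:ℝ) else 0) := by
    intro e
    calc (∑ x : Fin m → Fin k, ∑ y : Fin (n - m) → Fin k,
        slicePr k (n - m) y * (if (fun i => Sum.elim x y (e.symm i)) ∈ A then (1:ℝ) else 0))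
        = ∑ p : (Fin m → Fin k) × (Fin (n - m) → Fin k),
            slicePr k (n - m) p.2 *
              (if (fun i => Sum.elim p.1 p.2 (e.symm i)) ∈ A then (1:ℝ) else 0) :=
          (Fintype.sum_prod_type (fun p : (Fin m → Fin k) × (Fin (n - m) → Fin k) =>
            slicePr k (n - m) p.2 *
              (if (fun i => Sum.elim p.1 p.2 (e.symm i)) ∈ A then (1:ℝ) else 0))).symm
      _ = ∑ z : Fin n → Fin k,
          slicePr k (n - m) (fun t => z (e (Sum.inr t))) * (if z ∈ A then (1:ℝ) else 0) := by
          apply Fintype.sum_equiv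
            ((Equiv.sumArrowEquivProdArrow (Fin m) (Fin (n - m)) (Fin k)).symm.trans
              (e.arrowCongr (Equiv.refl (Fin k))))
          rintro ⟨x, y⟩
          have hΦ : (((Equiv.sumArrowEquivProdArrow (Fin m) (Fin (n - m)) (Fin k)).symm.trans
              (e.arrowCongr (Equiv.refl (Fin k)))) (x, y)) = fun i => Sum.elim x y (e.symm i) := rfl
          rw [hΦ]
          have hy : (fun t => (fun i => Sum.elim x y (e.symm i)) (e (Sum.inr t))) = y := by
            funext t
            simp
          rw [hy]
  -- the big expression equals ∑ z in A, w z
  have hP : (((Fintype.card ((Fin m ⊕ Fin (n - m)) ≃ Fin n) : ℝ))⁻¹ *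
        ∑ e : (Fin m ⊕ Fin (n - m)) ≃ Fin n,
          ((k : ℝ) ^ m)⁻¹ *
            ∑ x : Fin m → Fin k, ∑ y : Fin (n - m) → Fin k,
              slicePr k (n - m) y *
                (if (fun i => Sum.elim x y (e.symm i)) ∈ A then (1 : ℝ) else 0))
      = ∑ z ∈ A, w z := by
    rw [Finset.sum_congr rfl (fun e _ => by rw [hinner e])]
    rw [← Finset.mul_sum, Finset.sum_comm]
    rw [hcardE]
    rw [Finset.mul_sum, Finset.mul_sum]
    have hterm : ∀ z : Fin n → Fin k,
        (n.factorial : ℝ)⁻¹ * (((k:ℝ)^m)⁻¹ *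
          ∑ e : (Fin m ⊕ Fin (n - m)) ≃ Fin n,
            slicePr k (n - m) (fun t => z (e (Sum.inr t))) * (if z ∈ A then (1:ℝ) else 0))
        = if z ∈ A then w z else 0 := by
      intro z
      rw [← Finset.sum_mul]
      by_cases hz : z ∈ A
      · rw [if_pos hz, if_pos hz, hw]
        ring
      · rw [if_neg hz, if_neg hz]
        ring
    rw [Finset.sum_congr rfl (fun z _ => hterm z)]
    rw [Finset.sum_ite_mem, Finset.univ_inter]
  -- w is nonnegative
  have hw0 : ∀ z : Fin n → Fin k, 0 ≤ w z := by
    intro z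
    rw [hw]
    have : (0:ℝ) ≤ ∑ e : (Fin m ⊕ Fin (n - m)) ≃ Fin n,
        slicePr k (n - m) (fun t => z (e (Sum.inr t))) :=
      Finset.sum_nonneg fun e _ => slicePr_nonneg _ _ _
    positivity
  -- total mass of w is 1
  have hsum_e : ∀ e : (Fin m ⊕ Fin (n - m)) ≃ Fin n,
      (∑ z : Fin n → Fin k, slicePr k (n - m) (fun t => z (e (Sum.inr t)))) = (k:ℝ)^m := by
    intro e
    have h3 : (∑ p : (Fin m → Fin k) × (Fin (n - m) → Fin k), slicePr k (n - m) p.2)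
        = ∑ z : Fin n → Fin k, slicePr k (n - m) (fun t => z (e (Sum.inr t))) := by
      apply Fintype.sum_equiv
        ((Equiv.sumArrowEquivProdArrow (Fin m) (Fin (n - m)) (Fin k)).symm.trans
          (e.arrowCongr (Equiv.refl (Fin k))))
      rintro ⟨x, y⟩
      have hΦ : (((Equiv.sumArrowEquivProdArrow (Fin m) (Fin (n - m)) (Fin k)).symm.trans
          (e.arrowCongr (Equiv.refl (Fin k)))) (x, y)) = fun i => Sum.elim x y (e.symm i) := rfl
      rw [hΦ]
      have hy : (fun t => (fun i => Sum.elim x y (e.symm i)) (e (Sum.inr t))) = y := by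
        funext t
        simp
      rw [hy]
    rw [← h3]
    rw [show (∑ p : (Fin m → Fin k) × (Fin (n - m) → Fin k), slicePr k (n - m) p.2)
      = ∑ x : Fin m → Fin k, ∑ y : Fin (n - m) → Fin k, slicePr k (n - m) y
      from Fintype.sum_prod_type _]
    have h4 : ∀ x : Fin m → Fin k, (∑ y : Fin (n - m) → Fin k, slicePr k (n - m) y) = 1 :=
      fun x => sum_slicePr hk (n - m)
    rw [Finset.sum_congr rfl (fun x _ => h4 x), Finset.sum_const, Finset.card_univ]
    simp [Fintype.card_fun]
  have hw_sum : (∑ z : Fin n → Fin k, w z) = 1 := by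
    simp only [hw]
    rw [← Finset.mul_sum, ← Finset.mul_sum, Finset.sum_comm]
    rw [Finset.sum_congr rfl (fun e _ => hsum_e e), Finset.sum_const, Finset.card_univ, hcardE]
    rw [nsmul_eq_mul]
    field_simp
  -- density facts
  have hδ : (∑ z ∈ A, slicePr k n z) = δ := hA
  have hν1 : (∑ z : Fin n → Fin k, slicePr k n z) = 1 := sum_slicePr hk n
  have hδ0 : 0 ≤ δ := by
    rw [← hδ]
    exact Finset.sum_nonneg fun z _ => slicePr_nonneg _ _ _
  have hδ1 : δ ≤ 1 := by
    rw [← hδ, ← hν1]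
    exact Finset.sum_le_sum_of_subset_of_nonneg (Finset.subset_univ A)
      (fun z _ _ => slicePr_nonneg _ _ _)
  have hP0 : 0 ≤ ∑ z ∈ A, w z := Finset.sum_nonneg fun z _ => hw0 z
  have hP1 : (∑ z ∈ A, w z) ≤ 1 := by
    rw [← hw_sum]
    exact Finset.sum_le_sum_of_subset_of_nonneg (Finset.subset_univ A) (fun z _ _ => hw0 z)
  rw [hP]
  rcases le_or_gt β 1 with hβ1 | hβ1
  · -- main case
    -- choose-ratio bound
    have h8 : (m:ℝ) * (8 * k) ≤ β * n := by
      rw [le_div_iff₀ (by positivity)] at h1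
      linarith
    have h2m : 2 * m ≤ n := by
      have : (2*m : ℝ) ≤ (n:ℝ) := by nlinarith
      exact_mod_cast this
    set a : ℝ := 2 * ((k:ℝ) - 1) / n with hadef
    have ha : 0 ≤ a := by
      apply div_nonneg _ (le_of_lt hnR)
      linarith
    have hCC' : ((n + k - 1).choose (k-1) : ℝ)
        ≤ (1 + β) * (((n - m) + k - 1).choose (k-1) : ℝ) := by
      have hchain := choose_chain hk a ha (n - m) m ?_
      · have hrw : (n - m) + m = n := by omega
        rw [hrw] at hchain
        have hmR : (0:ℝ) ≤ (m:ℝ) := Nat.cast_nonneg m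
        have hma : (m:ℝ) * a ≤ 1/2 := by
          have hrw2 : (m:ℝ) * a = (2*(m:ℝ)*((k:ℝ)-1))/n := by rw [hadef]; ring
          rw [hrw2, div_le_iff₀ hnR]
          nlinarith
        have hpow := pow_one_add_le a ha m hma
        have h2ma : 2*(m:ℝ)*a ≤ β := by
          have hrw2 : 2*(m:ℝ) * a = (4*(m:ℝ)*((k:ℝ)-1))/n := by rw [hadef]; ring
          rw [hrw2, div_le_iff₀ hnR]
          nlinarith
        have hC'0 : (0:ℝ) ≤ (((n - m) + k - 1).choose (k-1) : ℝ) := Nat.cast_nonneg _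
        calc ((n + k - 1).choose (k-1) : ℝ)
            ≤ (1+a)^m * (((n - m) + k - 1).choose (k-1) : ℝ) := hchain
          _ ≤ (1 + 2*(m:ℝ)*a) * (((n - m) + k - 1).choose (k-1) : ℝ) :=
              mul_le_mul_of_nonneg_right hpow hC'0
          _ ≤ (1 + β) * (((n - m) + k - 1).choose (k-1) : ℝ) :=
              mul_le_mul_of_nonneg_right (by linarith) hC'0
      · intro t htb htj
        have hcast : ((n - m : ℕ) : ℝ) = (n:ℝ) - (m:ℝ) := by
          push_cast [Nat.cast_sub hmn]
          ring
        have htR : (n:ℝ) - (m:ℝ) ≤ (t:ℝ) := by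
          rw [← hcast]
          exact_mod_cast htb
        have h2mR : 2*(m:ℝ) ≤ (n:ℝ) := by exact_mod_cast h2m
        have hrw2 : a * ((t:ℝ)+1) = (2*((k:ℝ)-1)*((t:ℝ)+1))/n := by rw [hadef]; ring
        rw [hrw2, le_div_iff₀ hnR]
        nlinarith
    -- pointwise bound on w
    have hw_le : ∀ z : Fin n → Fin k, w z ≤ (1 + β) * slicePr k n z := by
      intro z
      have hkey := key k (Fin (n - m)) m (Fin n) z
      rw [Fintype.card_fin] at hkey
      have hkeyR : (∑ e : (Fin m ⊕ Fin (n - m)) ≃ Fin n,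
          (Pfac (fun t => z (e (Sum.inr t))) : ℝ))
          ≤ (k:ℝ)^m * ((n - m).factorial : ℝ) * (Pfac z : ℝ) := by
        exact_mod_cast hkey
      have hC'pos : (0:ℝ) < (((n - m) + k - 1).choose (k-1) : ℝ) := by
        exact_mod_cast Nat.choose_pos (show k - 1 ≤ (n - m) + k - 1 by omega)
      have hCpos : (0:ℝ) < ((n + k - 1).choose (k-1) : ℝ) := by
        exact_mod_cast Nat.choose_pos (show k - 1 ≤ n + k - 1 by omega)
      have hNfpos : (0:ℝ) < ((n - m).factorial : ℝ) := by exact_mod_cast (n - m).factorial_pos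
      have hPz : (0:ℝ) ≤ (Pfac z : ℝ) := Nat.cast_nonneg _
      have hsplit : (∑ e : (Fin m ⊕ Fin (n - m)) ≃ Fin n,
          slicePr k (n - m) (fun t => z (e (Sum.inr t))))
          = (((n - m) + k - 1).choose (k-1) : ℝ)⁻¹ *
            ((∑ e : (Fin m ⊕ Fin (n - m)) ≃ Fin n,
              (Pfac (fun t => z (e (Sum.inr t))) : ℝ)) / ((n - m).factorial : ℝ)) := by
        simp only [slicePr_eq]
        rw [← Finset.mul_sum, ← Finset.sum_div]
      have hinv : (((n - m) + k - 1).choose (k-1) : ℝ)⁻¹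
          ≤ (1 + β) * ((n + k - 1).choose (k-1) : ℝ)⁻¹ := by
        rw [inv_eq_one_div, inv_eq_one_div, ← mul_div_assoc, mul_one,
          div_le_div_iff₀ hC'pos hCpos]
        linarith
      calc w z
          = (n.factorial : ℝ)⁻¹ * (((k:ℝ)^m)⁻¹ *
              ((((n - m) + k - 1).choose (k-1) : ℝ)⁻¹ *
              ((∑ e : (Fin m ⊕ Fin (n - m)) ≃ Fin n,
                (Pfac (fun t => z (e (Sum.inr t))) : ℝ)) / ((n - m).factorial : ℝ)))) := by
            simp only [hw]
            rw [hsplit]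
        _ ≤ (n.factorial : ℝ)⁻¹ * (((k:ℝ)^m)⁻¹ *
              ((((n - m) + k - 1).choose (k-1) : ℝ)⁻¹ *
              (((k:ℝ)^m * ((n - m).factorial : ℝ) * (Pfac z : ℝ)) / ((n - m).factorial : ℝ)))) := by
            gcongr
        _ = (((n - m) + k - 1).choose (k-1) : ℝ)⁻¹ * ((Pfac z : ℝ) / (n.factorial : ℝ)) := by
            field_simp
        _ ≤ ((1 + β) * ((n + k - 1).choose (k-1) : ℝ)⁻¹) * ((Pfac z : ℝ) / (n.factorial : ℝ)) := by
            apply mul_le_mul_of_nonneg_right hinv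
            positivity
        _ = (1 + β) * slicePr k n z := by
            rw [slicePr_eq]
            ring
    constructor
    · -- lower bound
      have hcompl_w : (∑ z ∈ A, w z) + (∑ z ∈ Aᶜ, w z) = 1 := by
        rw [Finset.sum_add_sum_compl, hw_sum]
      have hcompl_ν : (∑ z ∈ A, slicePr k n z) + (∑ z ∈ Aᶜ, slicePr k n z) = 1 := by
        rw [Finset.sum_add_sum_compl, hν1]
      have hup : (∑ z ∈ Aᶜ, w z) ≤ (1 + β) * ∑ z ∈ Aᶜ, slicePr k n z := by
        rw [Finset.mul_sum]
        exact Finset.sum_le_sum fun z _ => hw_le z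
      have hν_compl0 : 0 ≤ ∑ z ∈ Aᶜ, slicePr k n z :=
        Finset.sum_nonneg fun z _ => slicePr_nonneg _ _ _
      nlinarith [hδ, hδ0, hβ.le]
    · -- upper bound
      have hup : (∑ z ∈ A, w z) ≤ (1 + β) * ∑ z ∈ A, slicePr k n z := by
        rw [Finset.mul_sum]
        exact Finset.sum_le_sum fun z _ => hw_le z
      rw [hδ] at hup
      nlinarith [hδ1, hβ.le]
  · constructor
    · linarith
    · linarith
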